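/- Let H be a complex Hilbert space with dim H > 2 and d a bounded decoherence functional on P(H) that extends to a bounded bilinear functional D on B(H) × B(H) (continuous in each argument in operator norm). For a unit vector Ψ₀ ∈ H ⊗ H with two representations Ψ₀ = Σ_{j=1}^N κ_j φ_j ⊗ ψ_j = Σ_{j=1}^M μ_j φ'_j ⊗ ψ'_j as finite combinations of simple tensors, the values Σ_{i,j=1}^N κ_i conj(κ_j) D(|φ_i⟩⟨φ_j|, |ψ_i⟩⟨ψ_j|) and Σ_{i,j=1}^M μ_i conj(μ_j) D(|φ'_i⟩⟨φ'_j|, |ψ'_i⟩⟨ψ'_j|) coincide, so d̂(P_{Ψ₀}) is well-defined. -/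

import Mathlib

open scoped InnerProductSpace ComplexOrder
open ContinuousLinearMap Filter

variable {H : Type*} [NormedAddCommGroup H] [InnerProductSpace ℂ H] [CompleteSpace H]

/-- The rank-one orthogonal projection onto the line spanned by a unit vector `v`. -/
noncomputable def projLine (v : H) : H →L[ℂ] H := (innerSL ℂ v).smulRight v

/-- `p` is an orthogonal projection: self-adjoint and idempotent. -/
def IsProjn (p : H →L[ℂ] H) : Prop := IsSelfAdjoint p ∧ p ∘L p = p

/-- `P` is the sum of the family `p` in the weak operator topology. -/
def WOTSum {ι : Type*} (p : ι → H →L[ℂ] H) (P : H →L[ℂ] H) : Prop :=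
  ∀ x y : H, HasSum (fun i => ⟪y, p i x⟫_ℂ) ⟪y, P x⟫_ℂ

/-- An abstract realization of the Hilbert-space tensor product `H ⊗ H` as a Hilbert space `K`,
together with the tensor product of bounded operators. -/
structure HTensor (H K : Type*) [NormedAddCommGroup H] [InnerProductSpace ℂ H] [CompleteSpace H]
    [NormedAddCommGroup K] [InnerProductSpace ℂ K] [CompleteSpace K] where
  /-- the tensor product of vectors -/
  tv : H →ₗ[ℂ] H →ₗ[ℂ] K
  inner_tv : ∀ a b c d : H, ⟪tv a b, tv c d⟫_ℂ = ⟪a, c⟫_ℂ * ⟪b, d⟫_ℂ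
  dense_span : (Submodule.span ℂ {z : K | ∃ a b, z = tv a b}).topologicalClosure = ⊤
  /-- the tensor product of bounded operators -/
  tp : (H →L[ℂ] H) → (H →L[ℂ] H) → (K →L[ℂ] K)
  tp_tv : ∀ (A B : H →L[ℂ] H) (a b : H), tp A B (tv a b) = tv (A a) (B b)

/-- A bounded operator is trace class iff its diagonal is (absolutely) summable in every
orthonormal basis. -/
def IsTraceClass {K : Type*} [NormedAddCommGroup K] [InnerProductSpace ℂ K] [CompleteSpace K]
    (T : K →L[ℂ] K) : Prop :=
  ∀ {ι : Type*} (b : HilbertBasis ι ℂ K), Summable (fun i => ⟪b i, T (b i)⟫_ℂ)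

/-- The trace of an operator computed along a fixed Hilbert basis (for trace-class operators this
is independent of the basis). -/
noncomputable def traceAlong {K : Type*} [NormedAddCommGroup K] [InnerProductSpace ℂ K]
    [CompleteSpace K] {ι : Type*} (b : HilbertBasis ι ℂ K) (T : K →L[ℂ] K) : ℂ :=
  ∑' i, ⟪b i, T (b i)⟫_ℂ

variable {K : Type*} [NormedAddCommGroup K] [InnerProductSpace ℂ K] [CompleteSpace K]

/-- The rank-one operator `|a⟩⟨b| : x ↦ ⟨b, x⟩ a`. -/
noncomputable def ketBra {H : Type*} [NormedAddCommGroup H] [InnerProductSpace ℂ H]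
    [CompleteSpace H] (a b : H) : H →L[ℂ] H := (innerSL ℂ b).smulRight a

lemma ketBra_apply (a b x : H) : ketBra a b x = ⟪b, x⟫_ℂ • a := by
  simp [ketBra]

lemma ketBra_add_fst (a a' b : H) : ketBra (a + a') b = ketBra a b + ketBra a' b := by
  ext x; simp [ketBra_apply, smul_add]

lemma ketBra_smul_fst (t : ℂ) (a b : H) : ketBra (t • a) b = t • ketBra a b := by
  ext x
  simp only [ketBra_apply, ContinuousLinearMap.smul_apply]
  rw [smul_comm]

lemma ketBra_add_snd (a b b' : H) : ketBra a (b + b') = ketBra a b + ketBra a b' := by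
  ext x; simp [ketBra_apply, inner_add_left, add_smul]

lemma ketBra_smul_snd (t : ℂ) (a b : H) :
    ketBra a (t • b) = (starRingEnd ℂ) t • ketBra a b := by
  ext x; simp [ketBra_apply, inner_smul_left, smul_smul, mul_comm]

/-- If a finite combination of simple tensors vanishes, then every bilinear functional
(presented curried, linear in each slot) kills the corresponding combination. -/
lemma key_vanish {K : Type*} [NormedAddCommGroup K] [InnerProductSpace ℂ K] [CompleteSpace K]
    {n : Type*} [Fintype n]
    (T : HTensor H K) (c : n → ℂ) (a b : n → H)
    (h0 : ∑ i, c i • T.tv (a i) (b i) = 0)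
    (Φ : H → H →ₗ[ℂ] ℂ)
    (hadd : ∀ x y z, Φ (x + y) z = Φ x z + Φ y z)
    (hsmul : ∀ (t : ℂ) (x z : H), Φ (t • x) z = t * Φ x z) :
    ∑ i, c i * Φ (a i) (b i) = 0 := by
  -- Step A: inner product relations
  have hinner : ∀ x y : H, ∑ i, c i * (⟪x, a i⟫_ℂ * ⟪y, b i⟫_ℂ) = 0 := by
    intro x y
    have h := congrArg (fun z => ⟪T.tv x y, z⟫_ℂ) h0
    simpa [inner_sum, inner_smul_right, T.inner_tv] using h
  have hw : ∀ x : H, ∑ i, (c i * ⟪x, a i⟫_ℂ) • b i = 0 := by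
    intro x
    set w := ∑ i, (c i * ⟪x, a i⟫_ℂ) • b i with hwdef
    have h1 : ⟪w, w⟫_ℂ = 0 := by
      have : ⟪w, w⟫_ℂ = ∑ i, c i * (⟪x, a i⟫_ℂ * ⟪w, b i⟫_ℂ) := by
        rw [show ⟪w, w⟫_ℂ = ⟪w, ∑ i, (c i * ⟪x, a i⟫_ℂ) • b i⟫_ℂ from by rw [← hwdef]]
        simp [inner_sum, inner_smul_right, mul_assoc]
      rw [this, hinner x w]
    exact inner_self_eq_zero.mp h1
  -- Step B: expand over an orthonormal basis of the span of the `a i`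
  haveI : FiniteDimensional ℂ (Submodule.span ℂ (Set.range a)) :=
    FiniteDimensional.span_of_finite ℂ (Set.finite_range a)
  set E := Submodule.span ℂ (Set.range a) with hE
  let e := stdOrthonormalBasis ℂ E
  have hmem : ∀ i, a i ∈ E := fun i => Submodule.subset_span ⟨i, rfl⟩
  have hrep : ∀ i, a i = ∑ p, ⟪((e p : E) : H), a i⟫_ℂ • ((e p : E) : H) := by
    intro i
    have h2 := e.sum_repr ⟨a i, hmem i⟩
    have h3 : a i = ((∑ p, e.repr ⟨a i, hmem i⟩ p • e p : E) : H) := by rw [h2]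
    conv_lhs => rw [h3]
    rw [Submodule.coe_sum]
    refine Finset.sum_congr rfl fun p _ => ?_
    rw [SetLike.val_smul, e.repr_apply_apply]
    congr 1
  have hΦfst : ∀ (z : H) {m : ℕ} (f : Fin m → ℂ) (v : Fin m → H),
      Φ (∑ p, f p • v p) z = ∑ p, f p * Φ (v p) z := by
    intro z m f v
    let L : H →ₗ[ℂ] ℂ :=
      { toFun := fun x => Φ x z
        map_add' := fun x y => hadd x y z
        map_smul' := fun t x => by simpa using hsmul t x z }
    have : Φ (∑ p, f p • v p) z = L (∑ p, f p • v p) := rfl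
    rw [this, map_sum]
    simp [L]
  calc ∑ i, c i * Φ (a i) (b i)
      = ∑ i, ∑ p, (c i * ⟪((e p : E) : H), a i⟫_ℂ) * Φ ((e p : E) : H) (b i) := by
        refine Finset.sum_congr rfl fun i _ => ?_
        conv_lhs => rw [hrep i]
        rw [hΦfst, Finset.mul_sum]
        simp [mul_assoc]
    _ = ∑ p, ∑ i, (c i * ⟪((e p : E) : H), a i⟫_ℂ) * Φ ((e p : E) : H) (b i) :=
        Finset.sum_comm
    _ = ∑ p, Φ ((e p : E) : H) (∑ i, (c i * ⟪((e p : E) : H), a i⟫_ℂ) • b i) := by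
        refine Finset.sum_congr rfl fun p _ => ?_
        rw [map_sum]
        simp [smul_eq_mul]
    _ = 0 := by
        refine Finset.sum_eq_zero fun p _ => ?_
        rw [hw, map_zero]

/-- Auxiliary bilinear functional, linear in both slots. -/
noncomputable def PhiLin (D : (H →L[ℂ] H) →ₗ[ℂ] (H →L[ℂ] H) →ₗ[ℂ] ℂ) (f g : H) (x : H) :
    H →ₗ[ℂ] ℂ where
  toFun y := D (ketBra x f) (ketBra y g)
  map_add' y y' := by simp only [ketBra_add_fst, map_add]
  map_smul' t y := by simp only [ketBra_smul_fst, map_smul, RingHom.id_apply]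

lemma PhiLin_apply (D : (H →L[ℂ] H) →ₗ[ℂ] (H →L[ℂ] H) →ₗ[ℂ] ℂ) (f g x y : H) :
    PhiLin D f g x y = D (ketBra x f) (ketBra y g) := rfl

lemma PhiLin_addl (D : (H →L[ℂ] H) →ₗ[ℂ] (H →L[ℂ] H) →ₗ[ℂ] ℂ) (f g x y z : H) :
    PhiLin D f g (x + y) z = PhiLin D f g x z + PhiLin D f g y z := by
  simp only [PhiLin_apply, ketBra_add_fst, map_add, LinearMap.add_apply]

lemma PhiLin_smull (D : (H →L[ℂ] H) →ₗ[ℂ] (H →L[ℂ] H) →ₗ[ℂ] ℂ) (t : ℂ) (f g x z : H) :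
    PhiLin D f g (t • x) z = t * PhiLin D f g x z := by
  simp only [PhiLin_apply, ketBra_smul_fst, map_smul, LinearMap.smul_apply, smul_eq_mul]

/-- Auxiliary conjugated bilinear functional, linear in both slots. -/
noncomputable def PhiConj (D : (H →L[ℂ] H) →ₗ[ℂ] (H →L[ℂ] H) →ₗ[ℂ] ℂ) (f g : H) (x : H) :
    H →ₗ[ℂ] ℂ where
  toFun y := (starRingEnd ℂ) (D (ketBra f x) (ketBra g y))
  map_add' y y' := by simp only [ketBra_add_snd, map_add]
  map_smul' t y := by
    simp only [ketBra_smul_snd, map_smul, smul_eq_mul, map_mul, Complex.conj_conj,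
      RingHom.id_apply]

lemma PhiConj_apply (D : (H →L[ℂ] H) →ₗ[ℂ] (H →L[ℂ] H) →ₗ[ℂ] ℂ) (f g x y : H) :
    PhiConj D f g x y = (starRingEnd ℂ) (D (ketBra f x) (ketBra g y)) := rfl

lemma PhiConj_addl (D : (H →L[ℂ] H) →ₗ[ℂ] (H →L[ℂ] H) →ₗ[ℂ] ℂ) (f g x y z : H) :
    PhiConj D f g (x + y) z = PhiConj D f g x z + PhiConj D f g y z := by
  simp only [PhiConj_apply, ketBra_add_snd, map_add, LinearMap.add_apply]

lemma PhiConj_smull (D : (H →L[ℂ] H) →ₗ[ℂ] (H →L[ℂ] H) →ₗ[ℂ] ℂ) (t : ℂ) (f g x z : H) :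
    PhiConj D f g (t • x) z = t * PhiConj D f g x z := by
  simp only [PhiConj_apply, ketBra_smul_snd, map_smul, LinearMap.smul_apply, smul_eq_mul,
    map_mul, Complex.conj_conj]

/-- Well-definedness of `d̂(P_{Ψ₀})`: two representations of the same unit vector
`Ψ₀ ∈ H ⊗ H` as finite combinations of simple tensors yield the same value of the double sum
built from a bounded bilinear extension `D` of a bounded decoherence functional. -/
theorem dhat_well_defined
    (hdim : 2 < Module.rank ℂ H)
    (T : HTensor H K)
    (d : (H →L[ℂ] H) → (H →L[ℂ] H) → ℂ)
    (D : (H →L[ℂ] H) →ₗ[ℂ] (H →L[ℂ] H) →ₗ[ℂ] ℂ) (Kb : ℝ)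
    (hD : ∀ A B : H →L[ℂ] H, ‖D A B‖ ≤ Kb * ‖A‖ * ‖B‖)
    (hDd : ∀ h k, IsProjn h → IsProjn k → D h k = d h k)
    (Ψ0 : K) (hΨ0 : ‖Ψ0‖ = 1)
    {N M : ℕ} (κ : Fin N → ℂ) (φ ψ : Fin N → H) (μ : Fin M → ℂ) (φ' ψ' : Fin M → H)
    (hφ : ∀ j, ‖φ j‖ = 1) (hψ : ∀ j, ‖ψ j‖ = 1)
    (hφ' : ∀ j, ‖φ' j‖ = 1) (hψ' : ∀ j, ‖ψ' j‖ = 1)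
    (hrep1 : Ψ0 = ∑ j, κ j • T.tv (φ j) (ψ j))
    (hrep2 : Ψ0 = ∑ j, μ j • T.tv (φ' j) (ψ' j)) :
    ∑ i, ∑ j, κ i * (starRingEnd ℂ) (κ j) *
        D (ketBra (φ i) (φ j)) (ketBra (ψ i) (ψ j)) =
      ∑ i, ∑ j, μ i * (starRingEnd ℂ) (μ j) *
        D (ketBra (φ' i) (φ' j)) (ketBra (ψ' i) (ψ' j)) := by
  classical
  set c : Fin N ⊕ Fin M → ℂ := Sum.elim κ (fun j => -μ j) with hc
  set a : Fin N ⊕ Fin M → H := Sum.elim φ φ' with ha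
  set b : Fin N ⊕ Fin M → H := Sum.elim ψ ψ' with hb
  have h0 : ∑ i, c i • T.tv (a i) (b i) = 0 := by
    rw [Fintype.sum_sum_type]
    simp only [hc, ha, hb, Sum.elim_inl, Sum.elim_inr, neg_smul]
    rw [Finset.sum_neg_distrib, ← hrep1, ← hrep2]
    simp
  -- linear step
  have step_lin : ∀ f g : H,
      ∑ j, κ j * D (ketBra (φ j) f) (ketBra (ψ j) g)
        = ∑ j, μ j * D (ketBra (φ' j) f) (ketBra (ψ' j) g) := by
    intro f g
    have h := key_vanish T c a b h0 (PhiLin D f g)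
      (fun x y z => PhiLin_addl D f g x y z)
      (fun t x z => PhiLin_smull D t f g x z)
    rw [Fintype.sum_sum_type] at h
    simp only [hc, ha, hb, Sum.elim_inl, Sum.elim_inr, PhiLin_apply, neg_mul] at h
    rw [Finset.sum_neg_distrib] at h
    linear_combination h
  -- conjugate-linear step
  have step_conj : ∀ f g : H,
      ∑ j, (starRingEnd ℂ) (κ j) * D (ketBra f (φ j)) (ketBra g (ψ j))
        = ∑ j, (starRingEnd ℂ) (μ j) * D (ketBra f (φ' j)) (ketBra g (ψ' j)) := by
    intro f g
    have h := key_vanish T c a b h0 (PhiConj D f g)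
      (fun x y z => PhiConj_addl D f g x y z)
      (fun t x z => PhiConj_smull D t f g x z)
    have h' := congrArg (starRingEnd ℂ) h
    rw [map_sum, map_zero] at h'
    rw [Fintype.sum_sum_type] at h'
    simp only [hc, ha, hb, Sum.elim_inl, Sum.elim_inr, PhiConj_apply, map_mul,
      Complex.conj_conj, map_neg, neg_mul] at h'
    rw [Finset.sum_neg_distrib] at h'
    linear_combination h'
  -- assemble
  calc ∑ i, ∑ j, κ i * (starRingEnd ℂ) (κ j) *
          D (ketBra (φ i) (φ j)) (ketBra (ψ i) (ψ j))
      = ∑ i, κ i * ∑ j, (starRingEnd ℂ) (κ j) *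
          D (ketBra (φ i) (φ j)) (ketBra (ψ i) (ψ j)) := by
        simp [Finset.mul_sum, mul_assoc]
    _ = ∑ i, κ i * ∑ j, (starRingEnd ℂ) (μ j) *
          D (ketBra (φ i) (φ' j)) (ketBra (ψ i) (ψ' j)) := by
        exact Finset.sum_congr rfl fun i _ => by rw [step_conj (φ i) (ψ i)]
    _ = ∑ j, (starRingEnd ℂ) (μ j) * ∑ i, κ i *
          D (ketBra (φ i) (φ' j)) (ketBra (ψ i) (ψ' j)) := by
        simp only [Finset.mul_sum]
        rw [Finset.sum_comm]
        exact Finset.sum_congr rfl fun j _ => Finset.sum_congr rfl fun i _ => by ring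
    _ = ∑ j, (starRingEnd ℂ) (μ j) * ∑ i, μ i *
          D (ketBra (φ' i) (φ' j)) (ketBra (ψ' i) (ψ' j)) := by
        exact Finset.sum_congr rfl fun j _ => by rw [step_lin (φ' j) (ψ' j)]
    _ = ∑ i, ∑ j, μ i * (starRingEnd ℂ) (μ j) *
          D (ketBra (φ' i) (φ' j)) (ketBra (ψ' i) (ψ' j)) := by
        simp only [Finset.mul_sum]
        rw [Finset.sum_comm]
        exact Finset.sum_congr rfl fun i _ => Finset.sum_congr rfl fun j _ => by ring
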